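/- For every family of elements c_{i,j}, one for each pair (i,j) of case (C), (D) or (E), satisfying c_{p,j} ∈ t^{λ_p − λ_j}𝒪 for case-(C) pairs, c_{i,j} ∈ t^{λ_i − λ_j}𝒪 for case-(D) pairs, and c_{p,j} ∈ t^{λ_p − λ_j − N}𝒪 for case-(E) pairs, there exists v ∈ V such that: (a) (x⁻¹ v x)_{i,j} ∈ t^{ν*_i − ν*_j}𝒪 for every case-(B) pair (i,j), and (b) (x⁻¹ v x)_{i,j} − c_{i,j} ∈ t^{ν*_i − ν*_j}𝒪 for every pair (i,j) of case (C), (D) or (E). (This is the surjectivity of the map φ₂ of Lemma 4.5.) -/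

import Mathlib

open Matrix

noncomputable section

/-- The ring `𝒪 = ℂ[[t]]` of formal power series. -/
abbrev OO : Type := PowerSeries ℂ

/-- The field `K = ℂ((t))` of formal Laurent series. -/
abbrev KK : Type := LaurentSeries ℂ

/-- `t^k ∈ K` for an integer `k`. -/
def tz (k : ℤ) : KK := HahnSeries.single k 1

/-- The inclusion `𝒪 → K`. -/
def coeO : OO →+* KK := HahnSeries.ofPowerSeries ℤ ℂ

/-- `f` belongs to the `𝒪`-lattice `t^k 𝒪 ⊆ K`. -/
def memT (k : ℤ) (f : KK) : Prop := ∃ w : OO, f = tz k * coeO w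

/-- The `GL`-coordinates of the coroot `β∨ = e_p − e_{q+1}` (indices `0`-based). -/
def bcov (p q : ℕ) (i : ℕ) : ℤ := (if i = p then 1 else 0) - (if i = q + 1 then 1 else 0)

/-- The matrix `x = I + Σ_{j=p+1}^{q+1} t^{λ_p − λ_j − N} E_{p,j}` (indices `0`-based). -/
def xMat (n N p q : ℕ) (lam : ℕ → ℤ) : Matrix (Fin (n+1)) (Fin (n+1)) KK :=
  Matrix.of fun i j =>
    if i = j then 1
    else if (i : ℕ) = p ∧ p < (j : ℕ) ∧ (j : ℕ) ≤ q + 1 then tz (lam p - lam j - N)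
    else 0

/-- `V`: trace-zero matrices with entries in `𝒪` such that `v_{i,j} ∈ t^{λ_i−λ_j}𝒪` for `i < j`. -/
def Vset (n : ℕ) (lam : ℕ → ℤ) : Set (Matrix (Fin (n+1)) (Fin (n+1)) KK) :=
  {v | Matrix.trace v = 0 ∧ (∀ i j : Fin (n+1), memT 0 (v i j)) ∧
    ∀ i j : Fin (n+1), i < j → memT (lam i - lam j) (v i j)}

/-- Case (B): `i ≠ p` and (`j ≤ p` or `j > q+1`). -/
def caseB (p q i j : ℕ) : Prop := i ≠ p ∧ (j ≤ p ∨ q + 1 < j)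

/-- Case (C): `i = p` and `j > q+1`. -/
def caseC (p q i j : ℕ) : Prop := i = p ∧ q + 1 < j

/-- Case (D): `p < j ≤ q+1` and `i ≠ p`. -/
def caseD (p q i j : ℕ) : Prop := p < j ∧ j ≤ q + 1 ∧ i ≠ p

/-- Case (E): `i = p` and `p < j ≤ q+1`. -/
def caseE (p q i j : ℕ) : Prop := i = p ∧ p < j ∧ j ≤ q + 1

lemma tz_mul (a b : ℤ) : tz a * tz b = tz (a+b) := by
  simp [tz, HahnSeries.single_mul_single]

lemma tz_zero : tz 0 = 1 := by simp [tz]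

lemma coeO_X : coeO (PowerSeries.X) = tz 1 := by
  simp [coeO, tz, HahnSeries.ofPowerSeries_X]

lemma coeO_X_pow (m : ℕ) : coeO (PowerSeries.X ^ m) = tz m := by
  induction m with
  | zero => simp [tz_zero]
  | succ k ih => rw [pow_succ, _root_.map_mul, ih, coeO_X, tz_mul]; norm_num

lemma memT_zero (k : ℤ) : memT k 0 := ⟨0, by simp⟩

lemma memT_add {k : ℤ} {f g : KK} (hf : memT k f) (hg : memT k g) : memT k (f + g) := by
  obtain ⟨w, rfl⟩ := hf; obtain ⟨u, rfl⟩ := hg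
  exact ⟨w + u, by rw [_root_.map_add, mul_add]⟩

lemma memT_neg {k : ℤ} {f : KK} (hf : memT k f) : memT k (-f) := by
  obtain ⟨w, rfl⟩ := hf
  exact ⟨-w, by rw [map_neg]; ring⟩

lemma memT_sub {k : ℤ} {f g : KK} (hf : memT k f) (hg : memT k g) : memT k (f - g) := by
  rw [sub_eq_add_neg]; exact memT_add hf (memT_neg hg)

lemma memT_mono {k m : ℤ} (h : k ≤ m) {f : KK} (hf : memT m f) : memT k f := by
  obtain ⟨w, rfl⟩ := hf
  refine ⟨PowerSeries.X ^ (m - k).toNat * w, ?_⟩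
  rw [_root_.map_mul, coeO_X_pow, ← mul_assoc, tz_mul]
  congr 2
  omega

lemma memT_coeO (w : OO) : memT 0 (coeO w) := ⟨w, by rw [tz_zero, one_mul]⟩

/-- surjectivity of `φ₂`, Lemma 4.5: for any family `c_{i,j}` indexed by the
pairs of cases (C), (D), (E), with `c_{p,j} ∈ t^{λ_p−λ_j}𝒪` in case (C),
`c_{i,j} ∈ t^{λ_i−λ_j}𝒪` in case (D), and `c_{p,j} ∈ t^{λ_p−λ_j−N}𝒪` in case (E), there is
`v ∈ V` with `(x⁻¹ v x)_{i,j} ∈ t^{ν*_i−ν*_j}𝒪` for every case-(B) pair and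
`(x⁻¹ v x)_{i,j} ≡ c_{i,j} mod t^{ν*_i−ν*_j}𝒪` for every pair of case (C), (D) or (E).
(Indices are `0`-based: rows and columns run through `0,…,n`, and `0 ≤ p ≤ q ≤ n−1`.) -/
theorem stmt8 (n : ℕ) (hn : 1 ≤ n) (N : ℕ) (hN : 1 ≤ N)
    (p q : ℕ) (hpq : p ≤ q) (hq : q < n)
    (lam mu : ℕ → ℤ)
    (hlam : ∀ i j : ℕ, i ≤ j → j ≤ n → lam j ≤ lam i)
    (hmu : ∀ i j : ℕ, i ≤ j → j ≤ n → mu j ≤ mu i)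
    (nus : ℕ → ℤ) (hnus : ∀ i, nus i = lam i + mu i - N * bcov p q i)
    (hnusdom : ∀ i j : ℕ, i ≤ j → j ≤ n → nus j ≤ nus i)
    (h2a : (N : ℤ) ≤ lam p - lam (p + 1)) (h2b : (N : ℤ) ≤ lam q - lam (q + 1))
    (h2c : (N : ℤ) ≤ mu p - mu (p + 1)) (h2d : (N : ℤ) ≤ mu q - mu (q + 1))
    (c : Fin (n+1) → Fin (n+1) → KK)
    (hcC : ∀ i j : Fin (n+1), i < j → caseC p q i j → memT (lam i - lam j) (c i j))
    (hcD : ∀ i j : Fin (n+1), i < j → caseD p q i j → memT (lam i - lam j) (c i j))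
    (hcE : ∀ i j : Fin (n+1), i < j → caseE p q i j → memT (lam i - lam j - N) (c i j)) :
    ∃ v ∈ Vset n lam,
      (∀ i j : Fin (n+1), i < j → caseB p q i j →
        memT (nus i - nus j) (((xMat n N p q lam)⁻¹ * v * xMat n N p q lam) i j)) ∧
      ∀ i j : Fin (n+1), i < j → (caseC p q i j ∨ caseD p q i j ∨ caseE p q i j) →
        memT (nus i - nus j) (((xMat n N p q lam)⁻¹ * v * xMat n N p q lam) i j - c i j) := by
  classical
  have hpn : p < n + 1 := by omega
  set P : Fin (n+1) := ⟨p, hpn⟩ with hPdef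
  have hPv : (P : ℕ) = p := rfl
  -- choose the power-series witnesses for case-E and case-D entries of c
  have hEex : ∀ j : Fin (n+1), ∃ d : OO,
      (p < (j:ℕ) ∧ (j:ℕ) ≤ q+1) → c P j = tz (lam p - lam (j:ℕ) - (N:ℤ)) * coeO d := by
    intro j
    by_cases h : p < (j:ℕ) ∧ (j:ℕ) ≤ q+1
    · have hlt : P < j := by
        rw [Fin.lt_def]; exact h.1
      obtain ⟨d, hd⟩ := hcE P j hlt ⟨rfl, h.1, h.2⟩
      exact ⟨d, fun _ => hd⟩
    · exact ⟨0, fun h' => absurd h' h⟩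
  choose dE hdE using hEex
  have hDex : ∀ i j : Fin (n+1), ∃ d : OO,
      ((i:ℕ) < (j:ℕ) ∧ p < (j:ℕ) ∧ (j:ℕ) ≤ q+1 ∧ (i:ℕ) ≠ p) →
        c i j = tz (lam (i:ℕ) - lam (j:ℕ)) * coeO d := by
    intro i j
    by_cases h : (i:ℕ) < (j:ℕ) ∧ p < (j:ℕ) ∧ (j:ℕ) ≤ q+1 ∧ (i:ℕ) ≠ p
    · obtain ⟨d, hd⟩ := hcD i j (Fin.lt_def.mpr h.1) ⟨h.2.1, h.2.2.1, h.2.2.2⟩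
      exact ⟨d, fun _ => hd⟩
    · exact ⟨0, fun h' => absurd h' h⟩
  choose dD hdD using hDex
  -- the main data
  set r : Fin (n+1) → KK :=
    fun j => if p < (j:ℕ) ∧ (j:ℕ) ≤ q+1 then tz (lam p - lam (j:ℕ) - (N:ℤ)) else 0 with hrdef
  have hrP : r P = 0 := by
    simp only [hrdef]
    rw [if_neg (by omega : ¬(p < (P:ℕ) ∧ (P:ℕ) ≤ q+1))]
  set U : Matrix (Fin (n+1)) (Fin (n+1)) KK :=
    Matrix.of (fun i j : Fin (n+1) => if (i:ℕ) = p then r j else 0) with hUdef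
  set m : ℕ := q + 2 - p with hm
  set DD : Fin (n+1) → OO :=
    fun j => dE j + ∑ k : Fin (n+1), (if p < (k:ℕ) ∧ (k:ℕ) < (j:ℕ) then dD k j else 0) with hDDdef
  set T : OO := ∑ j : Fin (n+1), (if p < (j:ℕ) ∧ (j:ℕ) ≤ q+1 then DD j else 0) with hTdef
  set sO : OO := PowerSeries.C ((m : ℂ)⁻¹) * T with hsOdef
  set v : Matrix (Fin (n+1)) (Fin (n+1)) KK := Matrix.of (fun i j =>
    if (i:ℕ) = (j:ℕ) then
      (if (i:ℕ) = p then coeO sO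
       else if p < (i:ℕ) ∧ (i:ℕ) ≤ q+1 then coeO sO - coeO (DD i) else 0)
    else if (i:ℕ) < (j:ℕ) then
      (if (i:ℕ) = p then (if q+1 < (j:ℕ) then c i j else 0)
       else if p < (j:ℕ) ∧ (j:ℕ) ≤ q+1 then c i j else 0)
    else 0) with hvdef
  -- basic entry facts
  have hvPcol : ∀ k : Fin (n+1), k ≠ P → v k P = 0 := by
    intro k hk
    have hkp : (k:ℕ) ≠ p := fun h => hk (Fin.ext (h.trans hPv.symm))
    simp only [hvdef, Matrix.of_apply]
    split_ifs <;> first | rfl | omega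
  -- x = 1 + U and x⁻¹ = 1 - U
  have hxU : xMat n N p q lam = 1 + U := by
    apply Matrix.ext
    intro i j
    by_cases hij : i = j
    · subst hij
      by_cases hip : (i:ℕ) = p
      · have hri : r i = 0 := by
          simp only [hrdef]
          rw [if_neg (by omega : ¬(p < (i:ℕ) ∧ (i:ℕ) ≤ q+1))]
        simp [xMat, hUdef, hip, hri, Matrix.one_apply]
      · simp [xMat, hUdef, hip, Matrix.one_apply]
    · by_cases hip : (i:ℕ) = p
      · by_cases hj : p < (j:ℕ) ∧ (j:ℕ) ≤ q+1
        · simp [xMat, hUdef, hij, hip, hj, hrdef, Matrix.one_apply_ne hij]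
        · simp [xMat, hUdef, hij, hip, hj, hrdef, Matrix.one_apply_ne hij]
      · simp [xMat, hUdef, hij, hip, Matrix.one_apply_ne hij]
  have hU2 : U * U = 0 := by
    apply Matrix.ext
    intro i j
    rw [Matrix.mul_apply, Matrix.zero_apply]
    apply Finset.sum_eq_zero
    intro k _
    by_cases hk : (k:ℕ) = p
    · have hrk : r k = 0 := by
        simp only [hrdef]
        rw [if_neg (by omega : ¬(p < (k:ℕ) ∧ (k:ℕ) ≤ q+1))]
      simp [hUdef, hrk]
    · simp [hUdef, hk]
  have hinv : (xMat n N p q lam)⁻¹ = 1 - U := by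
    apply Matrix.inv_eq_right_inv
    rw [hxU]
    have : (1 + U) * (1 - U) = 1 - U * U := by
      rw [mul_sub, mul_one, add_mul, one_mul]; abel
    rw [this, hU2, sub_zero]
  -- entry formulas for the products
  have hvU : ∀ i j : Fin (n+1), (v * U) i j = v i P * r j := by
    intro i j
    rw [Matrix.mul_apply]
    rw [Finset.sum_eq_single P]
    · simp [hUdef, hPv]
    · intro b _ hb
      have hbp : (b:ℕ) ≠ p := fun h => hb (Fin.ext (h.trans hPv.symm))
      simp [hUdef, hbp]
    · intro h; exact absurd (Finset.mem_univ P) h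
  have hUvP : ∀ j : Fin (n+1), (U * v) P j = ∑ k : Fin (n+1), r k * v k j := by
    intro j
    rw [Matrix.mul_apply]
    apply Finset.sum_congr rfl
    intro k _
    simp [hUdef, hPv]
  have hUvnp : ∀ i j : Fin (n+1), (i:ℕ) ≠ p → (U * v) i j = 0 := by
    intro i j hip
    rw [Matrix.mul_apply]
    apply Finset.sum_eq_zero
    intro k _
    simp [hUdef, hip]
  have hUvU : ∀ i j : Fin (n+1), (U * (v * U)) i j = 0 := by
    intro i j
    rw [Matrix.mul_apply]
    apply Finset.sum_eq_zero
    intro k _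
    rw [hvU k j]
    by_cases hk : k = P
    · subst hk
      simp [hUdef, hrP]
    · rw [hvPcol k hk, zero_mul, mul_zero]
  have hmm : (1 - U) * v * (1 + U) = v + v * U - (U * v + U * (v * U)) := by
    rw [sub_mul, one_mul, mul_add, mul_one, sub_mul, mul_assoc]; abel
  have hprod : ∀ i j : Fin (n+1), ((1 - U) * v * (1 + U)) i j
      = v i j + (v * U) i j - ((U * v) i j + (U * (v * U)) i j) := by
    intro i j
    rw [hmm]
    simp only [Matrix.sub_apply, Matrix.add_apply]
  have hentP : ∀ j : Fin (n+1), ((1 - U) * v * (1 + U)) P j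
      = v P j + v P P * r j - ∑ k : Fin (n+1), r k * v k j := by
    intro j
    rw [hprod, hvU, hUvP, hUvU, add_zero]
  have hentNP : ∀ i j : Fin (n+1), (i:ℕ) ≠ p → ((1 - U) * v * (1 + U)) i j
      = v i j + v i P * r j := by
    intro i j hip
    rw [hprod, hvU, hUvnp i j hip, hUvU, add_zero, sub_zero]
  -- the filter set and its cardinality
  set F : Finset (Fin (n+1)) :=
    Finset.univ.filter (fun i : Fin (n+1) => p < (i:ℕ) ∧ (i:ℕ) ≤ q+1) with hF
  have hcard : F.card = q + 1 - p := by
    rw [hF, Finset.card_filter]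
    rw [Fin.sum_univ_eq_sum_range (fun i => if p < i ∧ i ≤ q+1 then 1 else 0)]
    rw [← Finset.card_filter]
    have : Finset.filter (fun i => p < i ∧ i ≤ q+1) (Finset.range (n+1)) = Finset.Ioc p (q+1) := by
      ext a
      simp only [Finset.mem_filter, Finset.mem_range, Finset.mem_Ioc]
      omega
    rw [this, Nat.card_Ioc]
  have hTF : T = ∑ i ∈ F, DD i := by
    rw [hTdef, hF, Finset.sum_filter]
  have hm0 : ((m : ℕ) : ℂ) ≠ 0 := by
    rw [hm]
    exact_mod_cast (by omega : q + 2 - p ≠ 0)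
  have hmain : m • sO = T := by
    rw [hsOdef, nsmul_eq_mul]
    have hcast : ((m : ℕ) : OO) = PowerSeries.C ((m : ℕ) : ℂ) := by
      rw [map_natCast]
    rw [hcast, ← mul_assoc, ← _root_.map_mul, mul_inv_cancel₀ hm0, _root_.map_one, one_mul]
  -- v is in Vset
  have htrace : Matrix.trace v = 0 := by
    have htr : Matrix.trace v = ∑ i : Fin (n+1), v i i := by
      simp [Matrix.trace, Matrix.diag]
    rw [htr]
    have hdiag : ∀ i : Fin (n+1), v i i
        = (if (i:ℕ) = p then coeO sO else 0)
          + (if p < (i:ℕ) ∧ (i:ℕ) ≤ q+1 then coeO sO - coeO (DD i) else 0) := by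
      intro i
      simp only [hvdef, Matrix.of_apply]
      split_ifs <;> first | omega | simp
    rw [Finset.sum_congr rfl (fun i _ => hdiag i), Finset.sum_add_distrib]
    have h1 : (∑ i : Fin (n+1), if (i:ℕ) = p then coeO sO else 0) = coeO sO := by
      have hiff : ∀ i : Fin (n+1),
          (if (i:ℕ) = p then coeO sO else 0) = (if i = P then coeO sO else 0) := by
        intro i
        by_cases h : (i:ℕ) = p
        · rw [if_pos h, if_pos (Fin.ext (h.trans hPv.symm))]
        · rw [if_neg h, if_neg (fun hh => h (by rw [hh]))]
      rw [Finset.sum_congr rfl (fun i _ => hiff i)]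
      simp
    rw [h1, ← Finset.sum_filter, ← hF, Finset.sum_sub_distrib, Finset.sum_const, hcard]
    have h2 : (∑ i ∈ F, coeO (DD i)) = coeO T := by
      rw [hTF, map_sum]
    rw [h2, ← map_nsmul, ← map_sub, ← _root_.map_add]
    have h3 : sO + ((q + 1 - p) • sO - T) = 0 := by
      have hq2 : m = (q + 1 - p) + 1 := by rw [hm]; omega
      have h4 : sO + ((q + 1 - p) • sO - T) = m • sO - T := by
        rw [hq2, succ_nsmul]
        abel
      rw [h4, hmain, sub_self]
    rw [h3, map_zero]
  have hmem0 : ∀ i j : Fin (n+1), memT 0 (v i j) := by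
    intro i j
    by_cases h1 : (i:ℕ) = (j:ℕ)
    · simp only [hvdef, Matrix.of_apply, if_pos h1]
      by_cases h2 : (i:ℕ) = p
      · rw [if_pos h2]; exact memT_coeO _
      · rw [if_neg h2]
        by_cases h3 : p < (i:ℕ) ∧ (i:ℕ) ≤ q+1
        · rw [if_pos h3]; exact memT_sub (memT_coeO _) (memT_coeO _)
        · rw [if_neg h3]; exact memT_zero _
    · simp only [hvdef, Matrix.of_apply, if_neg h1]
      by_cases h2 : (i:ℕ) < (j:ℕ)
      · rw [if_pos h2]
        have hij : i < j := Fin.lt_def.mpr h2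
        have hjn : (j:ℕ) ≤ n := Nat.lt_succ_iff.mp j.isLt
        have hle : (0:ℤ) ≤ lam (i:ℕ) - lam (j:ℕ) := by
          have := hlam i j (Nat.le_of_lt h2) hjn; omega
        by_cases h3 : (i:ℕ) = p
        · rw [if_pos h3]
          by_cases h4 : q+1 < (j:ℕ)
          · rw [if_pos h4]; exact memT_mono hle (hcC i j hij ⟨h3, h4⟩)
          · rw [if_neg h4]; exact memT_zero _
        · rw [if_neg h3]
          by_cases h4 : p < (j:ℕ) ∧ (j:ℕ) ≤ q+1
          · rw [if_pos h4]; exact memT_mono hle (hcD i j hij ⟨h4.1, h4.2, h3⟩)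
          · rw [if_neg h4]; exact memT_zero _
      · rw [if_neg h2]; exact memT_zero _
  have hmemL : ∀ i j : Fin (n+1), i < j → memT (lam (i:ℕ) - lam (j:ℕ)) (v i j) := by
    intro i j hij
    have h2 : (i:ℕ) < (j:ℕ) := Fin.lt_def.mp hij
    have h1 : ¬((i:ℕ) = (j:ℕ)) := Nat.ne_of_lt h2
    simp only [hvdef, Matrix.of_apply, if_neg h1, if_pos h2]
    by_cases h3 : (i:ℕ) = p
    · rw [if_pos h3]
      by_cases h4 : q+1 < (j:ℕ)
      · rw [if_pos h4]; exact hcC i j hij ⟨h3, h4⟩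
      · rw [if_neg h4]; exact memT_zero _
    · rw [if_neg h3]
      by_cases h4 : p < (j:ℕ) ∧ (j:ℕ) ≤ q+1
      · rw [if_pos h4]; exact hcD i j hij ⟨h4.1, h4.2, h3⟩
      · rw [if_neg h4]; exact memT_zero _
  refine ⟨v, ⟨htrace, hmem0, hmemL⟩, ?_, ?_⟩
  · -- case B
    intro i j hij hB
    obtain ⟨hip, hor⟩ := hB
    rw [hinv, hxU, hentNP i j hip]
    have hiP : i ≠ P := fun h => hip (by rw [h])
    rw [hvPcol i hiP, zero_mul, add_zero]
    have h2 : (i:ℕ) < (j:ℕ) := Fin.lt_def.mp hij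
    have h1 : ¬((i:ℕ) = (j:ℕ)) := Nat.ne_of_lt h2
    have hv0 : v i j = 0 := by
      simp only [hvdef, Matrix.of_apply]
      split_ifs <;> first | rfl | omega
    rw [hv0]
    exact memT_zero _
  · -- cases C, D, E
    intro i j hij hcase
    have h2 : (i:ℕ) < (j:ℕ) := Fin.lt_def.mp hij
    have h1 : ¬((i:ℕ) = (j:ℕ)) := Nat.ne_of_lt h2
    rw [hinv, hxU]
    rcases hcase with hC | hD | hE
    · -- case C
      obtain ⟨hip, hq1⟩ := hC
      have hiP : i = P := Fin.ext (hip.trans hPv.symm)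
      subst hiP
      rw [hentP j]
      have hS : (∑ k : Fin (n+1), r k * v k j) = 0 := by
        apply Finset.sum_eq_zero
        intro k _
        by_cases hk : p < (k:ℕ) ∧ (k:ℕ) ≤ q+1
        · have hv0 : v k j = 0 := by
            simp only [hvdef, Matrix.of_apply]
            split_ifs <;> first | rfl | omega
          rw [hv0, mul_zero]
        · have hrk : r k = 0 := by
            simp only [hrdef]; rw [if_neg hk]
          rw [hrk, zero_mul]
      have hrj : r j = 0 := by
        simp only [hrdef]
        rw [if_neg (by omega : ¬(p < (j:ℕ) ∧ (j:ℕ) ≤ q+1))]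
      have hvij : v P j = c P j := by
        simp only [hvdef, Matrix.of_apply]
        split_ifs <;> first | rfl | omega
      rw [hrj, mul_zero, add_zero, hS, sub_zero, hvij, sub_self]
      exact memT_zero _
    · -- case D
      obtain ⟨hpj, hjq, hip⟩ := hD
      rw [hentNP i j hip]
      have hiP : i ≠ P := fun h => hip (by rw [h])
      rw [hvPcol i hiP, zero_mul, add_zero]
      have hvij : v i j = c i j := by
        simp only [hvdef, Matrix.of_apply]
        split_ifs <;> first | rfl | omega
      rw [hvij, sub_self]
      exact memT_zero _
    · -- case E
      obtain ⟨hip, hpj, hjq⟩ := hE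
      have hiP : i = P := Fin.ext (hip.trans hPv.symm)
      subst hiP
      rw [hentP j]
      have hrj : r j = tz (lam p - lam (j:ℕ) - (N:ℤ)) := by
        simp only [hrdef]; rw [if_pos ⟨hpj, hjq⟩]
      have hvPj : v P j = 0 := by
        simp only [hvdef, Matrix.of_apply]
        split_ifs <;> first | rfl | omega
      have hvPP : v P P = coeO sO := by
        simp only [hvdef, Matrix.of_apply]
        split_ifs <;> first | rfl | omega
      set B : KK := ∑ k : Fin (n+1),
        (if p < (k:ℕ) ∧ (k:ℕ) < (j:ℕ)
          then tz (lam p - lam (j:ℕ) - (N:ℤ)) * coeO (dD k j) else 0) with hBdef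
      have hS : (∑ k : Fin (n+1), r k * v k j)
          = tz (lam p - lam (j:ℕ) - (N:ℤ)) * (coeO sO - coeO (DD j)) + B := by
        have hterm : ∀ k : Fin (n+1), r k * v k j
            = (if k = j then tz (lam p - lam (j:ℕ) - (N:ℤ)) * (coeO sO - coeO (DD j)) else 0)
              + (if p < (k:ℕ) ∧ (k:ℕ) < (j:ℕ)
                  then tz (lam p - lam (j:ℕ) - (N:ℤ)) * coeO (dD k j) else 0) := by
          intro k
          by_cases hkj : (k:ℕ) = (j:ℕ)
          · have hkeq : k = j := Fin.ext hkj
            subst hkeq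
            have hvkk : v k k = coeO sO - coeO (DD k) := by
              simp only [hvdef, Matrix.of_apply]
              split_ifs <;> first | rfl | omega
            have hrk : r k = tz (lam p - lam (k:ℕ) - (N:ℤ)) := by
              simp only [hrdef]; rw [if_pos ⟨hpj, hjq⟩]
            rw [hvkk, hrk]
            simp
          · have hkne : k ≠ j := fun h => hkj (congrArg Fin.val h)
            rw [if_neg hkne, zero_add]
            by_cases hk2 : p < (k:ℕ) ∧ (k:ℕ) < (j:ℕ)
            · rw [if_pos hk2]
              have hrk : r k = tz (lam p - lam (k:ℕ) - (N:ℤ)) := by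
                simp only [hrdef]; rw [if_pos ⟨hk2.1, by omega⟩]
              have hvkj : v k j = c k j := by
                simp only [hvdef, Matrix.of_apply]
                split_ifs <;> first | rfl | omega
              rw [hrk, hvkj, hdD k j ⟨hk2.2, hpj, hjq, by omega⟩, ← mul_assoc, tz_mul]
              have harg : lam p - lam (k:ℕ) - (N:ℤ) + (lam (k:ℕ) - lam (j:ℕ))
                  = lam p - lam (j:ℕ) - (N:ℤ) := by ring
              rw [harg]
            · rw [if_neg hk2]
              by_cases hk3 : p < (k:ℕ) ∧ (k:ℕ) ≤ q+1
              · have hvkj : v k j = 0 := by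
                  simp only [hvdef, Matrix.of_apply]
                  split_ifs <;> first | rfl | omega
                rw [hvkj, mul_zero]
              · have hrk : r k = 0 := by
                  simp only [hrdef]; rw [if_neg hk3]
                rw [hrk, zero_mul]
        rw [Finset.sum_congr rfl (fun k _ => hterm k), Finset.sum_add_distrib]
        congr 1
        simp
      have hDDj : tz (lam p - lam (j:ℕ) - (N:ℤ)) * coeO (DD j) = c P j + B := by
        have hDDj' : DD j = dE j
            + ∑ k : Fin (n+1), (if p < (k:ℕ) ∧ (k:ℕ) < (j:ℕ) then dD k j else 0) := by
          rw [hDDdef]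
        rw [hDDj', _root_.map_add, mul_add]
        congr 1
        · exact (hdE j ⟨hpj, hjq⟩).symm
        · rw [map_sum, Finset.mul_sum, hBdef]
          apply Finset.sum_congr rfl
          intro k _
          rw [apply_ite coeO, map_zero, mul_ite, mul_zero]
      have hz : v P j + v P P * r j - (∑ k : Fin (n+1), r k * v k j) - c P j = 0 := by
        rw [hvPj, hvPP, hrj, hS]
        linear_combination hDDj
      rw [hz]
      exact memT_zero _
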